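/- arXiv:1806.03347 — 2 statements merged into one kernel-verified Lean document; each statement's English description precedes it below -/
import Mathlib

section
/- Let x* ∈ Ω be a point with ∇φ(x*) = 0, where φ is the penalty-barrier function with parameters ρ, ω, τ_E > 0. Define λ* = -(1/ω)·c(x*), μ_L* = τ_E/(x* - x_L) (componentwise), μ_R* = τ_E/(x_R - x*) (componentwise). Then z* = (x*, λ*, μ_L*, μ_R*) satisfies F(z*, p) = 0 with p = (τ_E, 0) and ω̃-term absorbed appropriately; conversely if F(z, (τ_E, λ̂)) = 0 with λ = 0, then ∇φ(x) = 0. -/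
open Matrix

noncomputable def pr (n : ℕ) (i : Fin n) : (Fin n → ℝ) →L[ℝ] ℝ := ContinuousLinearMap.proj i

lemma pr_apply (n : ℕ) (i : Fin n) (v : Fin n → ℝ) : pr n i v = v i := rfl

lemma phi_has_deriv {n m : ℕ} (xL xR : Fin n → ℝ)
    (f : (Fin n → ℝ) → ℝ) (hf : Differentiable ℝ f)
    (c : (Fin n → ℝ) → Fin m → ℝ) (hc : ∀ j, Differentiable ℝ (fun x => c x j))
    (S : Matrix (Fin n) (Fin n) ℝ) (hS : S.PosDef)
    (ρ ω τE : ℝ) (hω : ω ≠ 0)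
    (x : Fin n → ℝ) (hx : ∀ i, xL i < x i ∧ x i < xR i) :
    ∃ L : (Fin n → ℝ) →L[ℝ] ℝ,
      HasFDerivAt (fun x =>
        f x + ρ / 2 * (x ⬝ᵥ S.mulVec x)
          + 1 / (2 * ω) * ∑ j, (c x j) ^ 2
          - τE * ∑ i, (Real.log (x i - xL i) + Real.log (xR i - x i))) L x ∧
      ∀ i, L (Pi.single i 1) =
        fderiv ℝ f x (Pi.single i 1) + ρ * S.mulVec x i
          + (1 / ω) * ∑ j, c x j * fderiv ℝ (fun y => c y j) x (Pi.single i 1)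
          - τE / (x i - xL i) + τE / (xR i - x i) := by
  have hL : ∀ i, x i - xL i ≠ 0 := fun i => ne_of_gt (by linarith [(hx i).1])
  have hR : ∀ i, xR i - x i ≠ 0 := fun i => ne_of_gt (by linarith [(hx i).2])
  have hq : ∀ y : Fin n → ℝ, y ⬝ᵥ S.mulVec y = ∑ i, ∑ j, S i j * (y i * y j) := by
    intro y
    simp only [dotProduct, mulVec, Finset.mul_sum]
    congr 1; ext i; congr 1; ext j; ring
  set Lq : (Fin n → ℝ) →L[ℝ] ℝ :=
    ∑ i, ∑ j, S i j • ((x i) • pr n j + (x j) • pr n i) with hLq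
  have hquad : HasFDerivAt (fun y : Fin n → ℝ => y ⬝ᵥ S.mulVec y) Lq x := by
    have hfun : (fun y : Fin n → ℝ => y ⬝ᵥ S.mulVec y)
        = fun y => ∑ i, ∑ j, S i j * (y i * y j) := funext hq
    rw [hfun, hLq]
    apply HasFDerivAt.fun_sum; intro i _
    apply HasFDerivAt.fun_sum; intro j _
    exact ((hasFDerivAt_apply (𝕜 := ℝ) i x).mul (hasFDerivAt_apply (𝕜 := ℝ) j x)).const_mul _
  set Lc : (Fin n → ℝ) →L[ℝ] ℝ :=
    ∑ j, (2 * c x j) • fderiv ℝ (fun y => c y j) x with hLc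
  have hcsq : HasFDerivAt (fun y => ∑ j, (c y j) ^ 2) Lc x := by
    rw [hLc]
    apply HasFDerivAt.fun_sum; intro j _
    have hfn : (fun y => (c y j) ^ 2) = fun y => c y j * c y j := by funext y; ring
    have h := ((hc j).differentiableAt (x := x)).hasFDerivAt
    have := h.mul h
    rw [hfn]
    exact this.congr_fderiv (by rw [two_mul, add_smul])
  set Lb : (Fin n → ℝ) →L[ℝ] ℝ :=
    ∑ i, ((x i - xL i)⁻¹ • pr n i
      + (xR i - x i)⁻¹ • (-pr n i)) with hLb
  have hbar : HasFDerivAt (fun y => ∑ i, (Real.log (y i - xL i) + Real.log (xR i - y i))) Lb x := by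
    rw [hLb]
    apply HasFDerivAt.fun_sum; intro i _
    have h1 : HasFDerivAt (fun y : Fin n → ℝ => Real.log (y i - xL i))
        ((x i - xL i)⁻¹ • pr n i) x := by
      have hin : HasFDerivAt (fun y : Fin n → ℝ => y i - xL i)
          (pr n i) x := by
        simpa [pr] using (hasFDerivAt_apply (𝕜 := ℝ) i x).sub_const (xL i)
      exact HasDerivAt.comp_hasFDerivAt (𝕜 := ℝ) x (Real.hasDerivAt_log (hL i)) hin
    have h2 : HasFDerivAt (fun y : Fin n → ℝ => Real.log (xR i - y i))
        ((xR i - x i)⁻¹ • (-pr n i)) x := by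
      have hin : HasFDerivAt (fun y : Fin n → ℝ => xR i - y i)
          (-pr n i) x := by
        simpa [pr] using (hasFDerivAt_apply (𝕜 := ℝ) i x).const_sub (xR i)
      exact HasDerivAt.comp_hasFDerivAt (𝕜 := ℝ) x (Real.hasDerivAt_log (hR i)) hin
    exact h1.add h2
  have htot : HasFDerivAt (fun x =>
      f x + ρ / 2 * (x ⬝ᵥ S.mulVec x)
        + 1 / (2 * ω) * ∑ j, (c x j) ^ 2
        - τE * ∑ i, (Real.log (x i - xL i) + Real.log (xR i - x i)))
      (fderiv ℝ f x + (ρ / 2) • Lq + (1 / (2 * ω)) • Lc - τE • Lb) x := by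
    exact (((hf x).hasFDerivAt.add (hquad.const_mul _)).add (hcsq.const_mul _)).sub
      (hbar.const_mul _)
  refine ⟨_, htot, fun i => ?_⟩
  have hsym : ∀ a b, S a b = S b a := by
    intro a b
    have := hS.1
    rw [Matrix.IsHermitian] at this
    have := congrArg (fun M => M b a) this
    simpa [Matrix.conjTranspose_apply] using this
  have hLqv : Lq (Pi.single i 1) = 2 * S.mulVec x i := by
    rw [hLq]
    simp only [ContinuousLinearMap.sum_apply, ContinuousLinearMap.smul_apply,
      ContinuousLinearMap.add_apply, pr_apply, smul_eq_mul, Pi.single_apply,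
      mul_ite, mul_one, mul_zero, mul_add, Finset.sum_add_distrib]
    rw [Finset.sum_comm (s := Finset.univ) (t := Finset.univ)
      (f := fun x_1 x_2 => if x_1 = i then S x_1 x_2 * x x_2 else 0)]
    simp only [Finset.sum_ite_eq', Finset.mem_univ, if_true]
    have : ∀ a, S a i * x a = S i a * x a := fun a => by rw [hsym a i]
    rw [Finset.sum_congr rfl (fun a _ => this a)]
    simp [mulVec, dotProduct]; ring
  have hLcv : Lc (Pi.single i 1) = ∑ j, 2 * c x j * fderiv ℝ (fun y => c y j) x (Pi.single i 1) := by
    rw [hLc]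
    simp [ContinuousLinearMap.sum_apply]
  have hLbv : Lb (Pi.single i 1) = (x i - xL i)⁻¹ - (xR i - x i)⁻¹ := by
    rw [hLb]
    simp only [ContinuousLinearMap.sum_apply, ContinuousLinearMap.add_apply,
      ContinuousLinearMap.smul_apply, ContinuousLinearMap.neg_apply, pr_apply,
      Pi.single_apply, smul_eq_mul, mul_ite, mul_one, mul_zero]
    rw [Finset.sum_add_distrib, Finset.sum_ite_eq']
    simp only [mul_neg, mul_ite, mul_one, mul_zero, Finset.sum_neg_distrib, Finset.sum_ite_eq']
    simp [sub_eq_add_neg]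
  simp only [ContinuousLinearMap.sub_apply, ContinuousLinearMap.add_apply,
    ContinuousLinearMap.smul_apply, hLqv, hLcv, hLbv, smul_eq_mul]
  have h2 : (1/(2*ω)) * ∑ j, 2 * c x j * fderiv ℝ (fun y => c y j) x (Pi.single i 1)
      = (1/ω) * ∑ j, c x j * fderiv ℝ (fun y => c y j) x (Pi.single i 1) := by
    rw [Finset.mul_sum, Finset.mul_sum]
    apply Finset.sum_congr rfl
    intro j _
    field_simp
  rw [h2]
  ring

/-- Stationarity of the penalty-barrier function φ corresponds exactly to roots of
the interior-point root function F (funnel term w ≡ 0) with λ-component zero.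
Forward: if x* ∈ Ω and ∇φ(x*) = 0, then z* = (x*, λ = 0, μL*, μR*) with
λ̂ = -(1/ω)·c(x*), μL* = τE/(x*-x_L), μR* = τE/(x_R-x*) satisfies F(z*,(τE,λ̂)) = 0.
Converse: if F(z,(τE,λ̂)) = 0 with λ = 0 (and x ∈ Ω, μL, μR > 0) then ∇φ(x) = 0. -/
theorem stmt_3 (n m : ℕ) (xL xR : Fin n → ℝ)
    (f : (Fin n → ℝ) → ℝ) (hf : Differentiable ℝ f)
    (c : (Fin n → ℝ) → Fin m → ℝ) (hc : ∀ j, Differentiable ℝ (fun x => c x j))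
    (S : Matrix (Fin n) (Fin n) ℝ) (hS : S.PosDef)
    (ρ ω ωt τE : ℝ) (hρ : 0 < ρ) (hω : 0 < ω) (hωt : 0 < ωt) (hτE : 0 < τE)
    (φ : (Fin n → ℝ) → ℝ)
    (hφ : φ = fun x =>
        f x + ρ / 2 * (x ⬝ᵥ S.mulVec x)
          + 1 / (2 * ω) * ∑ j, (c x j) ^ 2
          - τE * ∑ i, (Real.log (x i - xL i) + Real.log (xR i - x i))) :
    -- forward direction
    (∀ xs : Fin n → ℝ, (∀ i, xL i < xs i ∧ xs i < xR i) →
      fderiv ℝ φ xs = 0 →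
        ((∀ i, fderiv ℝ f xs (Pi.single i 1)
            - (∑ j, ((-(1 / ω) * c xs j) + 0) * fderiv ℝ (fun x => c x j) xs (Pi.single i 1))
            + ρ * S.mulVec xs i
            - τE / (xs i - xL i) + τE / (xR i - xs i) = 0) ∧
         (∀ j, c xs j + ω * (-(1 / ω) * c xs j) + (ω + ωt) * (0 : ℝ) = 0) ∧
         (∀ i, (τE / (xs i - xL i)) * (xs i - xL i) - τE = 0) ∧
         (∀ i, (τE / (xR i - xs i)) * (xR i - xs i) - τE = 0))) ∧
    -- converse direction (λ = 0)
    (∀ (x μL μR : Fin n → ℝ) (lamhat : Fin m → ℝ),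
      (∀ i, xL i < x i ∧ x i < xR i) → (∀ i, 0 < μL i) → (∀ i, 0 < μR i) →
      (∀ i, fderiv ℝ f x (Pi.single i 1)
          - (∑ j, (lamhat j + 0) * fderiv ℝ (fun x => c x j) x (Pi.single i 1))
          + ρ * S.mulVec x i - μL i + μR i = 0) →
      (∀ j, c x j + ω * lamhat j + (ω + ωt) * (0 : ℝ) = 0) →
      (∀ i, μL i * (x i - xL i) - τE = 0) →
      (∀ i, μR i * (xR i - x i) - τE = 0) →
      fderiv ℝ φ x = 0) := by
  subst hφ
  have hω' : ω ≠ 0 := ne_of_gt hω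
  constructor
  · intro xs hxs hstat
    obtain ⟨L, hLd, hLv⟩ := phi_has_deriv xL xR f hf c hc S hS ρ ω τE hω' xs hxs
    have hL0 : L = 0 := by rw [← hLd.fderiv, hstat]
    have hLa : ∀ i, xs i - xL i ≠ 0 := fun i => ne_of_gt (by linarith [(hxs i).1])
    have hRa : ∀ i, xR i - xs i ≠ 0 := fun i => ne_of_gt (by linarith [(hxs i).2])
    refine ⟨fun i => ?_, fun j => ?_, fun i => ?_, fun i => ?_⟩
    · have e : fderiv ℝ f xs (Pi.single i 1) + ρ * S.mulVec xs i
          + (1 / ω) * ∑ j, c xs j * fderiv ℝ (fun y => c y j) xs (Pi.single i 1)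
          - τE / (xs i - xL i) + τE / (xR i - xs i) = 0 := by
        rw [← hLv i, hL0]; simp
      have hsum : ∑ j, ((-(1 / ω) * c xs j) + 0) * fderiv ℝ (fun x => c x j) xs (Pi.single i 1)
          = -((1 / ω) * ∑ j, c xs j * fderiv ℝ (fun y => c y j) xs (Pi.single i 1)) := by
        rw [Finset.mul_sum, ← Finset.sum_neg_distrib]
        apply Finset.sum_congr rfl
        intro j _; ring
      rw [hsum]
      linarith [e]
    · field_simp
      ring
    · rw [div_mul_cancel₀ _ (hLa i)]; ring
    · rw [div_mul_cancel₀ _ (hRa i)]; ring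
  · intro x μL μR lamhat hx hμL hμR h1 h2 h3 h4
    obtain ⟨L, hLd, hLv⟩ := phi_has_deriv xL xR f hf c hc S hS ρ ω τE hω' x hx
    have hLa : ∀ i, x i - xL i ≠ 0 := fun i => ne_of_gt (by linarith [(hx i).1])
    have hRa : ∀ i, xR i - x i ≠ 0 := fun i => ne_of_gt (by linarith [(hx i).2])
    have hlam : ∀ j, lamhat j = -(1 / ω) * c x j := by
      intro j
      have := h2 j
      field_simp at this ⊢
      linarith
    have hμLv : ∀ i, μL i = τE / (x i - xL i) := by
      intro i
      have := h3 i
      rw [eq_div_iff (hLa i)]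
      linarith
    have hμRv : ∀ i, μR i = τE / (xR i - x i) := by
      intro i
      have := h4 i
      rw [eq_div_iff (hRa i)]
      linarith
    have hzero : ∀ i, L (Pi.single i 1) = 0 := by
      intro i
      rw [hLv i]
      have e1 := h1 i
      rw [hμLv i, hμRv i] at e1
      have hsum : ∑ j, (lamhat j + 0) * fderiv ℝ (fun x => c x j) x (Pi.single i 1)
          = -((1 / ω) * ∑ j, c x j * fderiv ℝ (fun y => c y j) x (Pi.single i 1)) := by
        rw [Finset.mul_sum, ← Finset.sum_neg_distrib]
        apply Finset.sum_congr rfl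
        intro j _
        rw [hlam j]; ring
      rw [hsum] at e1
      linarith [e1]
    have hL0 : L = 0 := by
      ext v
      have hv : v = ∑ i, v i • (Pi.single i 1 : Fin n → ℝ) := by
        funext k
        simp [Finset.sum_apply, Pi.single_apply]
      rw [hv]
      rw [map_sum]
      simp [hzero]
    rw [hLd.fderiv, hL0]
end

section
/- Let M(z,p) be the primal-dual merit function restricted to the case m = 0 (no equality constraints) and ν ≥ 0: M(x, μ_L, μ_R) = f(x) + (ρ/2)‖x‖_S² - τΣ(log(x-x_L)+log(x_R-x)) - ντΣ(log(μ_L∘(x-x_L)/τ) + 1 - μ_L∘(x-x_L)/τ) - ντΣ(log(μ_R∘(x_R-x)/τ) + 1 - μ_R∘(x_R-x)/τ). Then (x*, μ_L*, μ_R*) is a stationary point of M with x* ∈ Ω, μ_L*, μ_R* > 0 if and only if ∇f(x*) + ρSx* - μ_L* + μ_R* = 0, μ_L*∘(x*-x_L) = τ·1, and μ_R*∘(x_R-x*) = τ·1. -/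
open Matrix

noncomputable def PP1 (n : ℕ) (i : Fin n) :
    ((Fin n → ℝ) × (Fin n → ℝ) × (Fin n → ℝ)) →L[ℝ] ℝ :=
  (ContinuousLinearMap.proj i).comp (ContinuousLinearMap.fst ℝ _ _)

noncomputable def PP2 (n : ℕ) (i : Fin n) :
    ((Fin n → ℝ) × (Fin n → ℝ) × (Fin n → ℝ)) →L[ℝ] ℝ :=
  (ContinuousLinearMap.proj i).comp ((ContinuousLinearMap.fst ℝ _ _).comp
    (ContinuousLinearMap.snd ℝ _ _))

noncomputable def PP3 (n : ℕ) (i : Fin n) :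
    ((Fin n → ℝ) × (Fin n → ℝ) × (Fin n → ℝ)) →L[ℝ] ℝ :=
  (ContinuousLinearMap.proj i).comp ((ContinuousLinearMap.snd ℝ _ _).comp
    (ContinuousLinearMap.snd ℝ _ _))

@[simp] lemma PP1_apply (n : ℕ) (i : Fin n) (v) : PP1 n i v = v.1 i := rfl
@[simp] lemma PP2_apply (n : ℕ) (i : Fin n) (v) : PP2 n i v = v.2.1 i := rfl
@[simp] lemma PP3_apply (n : ℕ) (i : Fin n) (v) : PP3 n i v = v.2.2 i := rfl

set_option maxHeartbeats 2000000

/-- Stationary points of the Forsgren–Gill-type primal-dual merit function M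
(case m = 0, no equality constraints) with x ∈ Ω, μ_L, μ_R > 0 are exactly the
roots of the barrier-KKT system: ∇f(x) + ρSx - μ_L + μ_R = 0,
μ_L∘(x-x_L) = τ·1, μ_R∘(x_R-x) = τ·1. -/
theorem stmt_19 (n : ℕ) (xL xR : Fin n → ℝ)
    (f : (Fin n → ℝ) → ℝ) (hf : ContDiff ℝ 2 f)
    (S : Matrix (Fin n) (Fin n) ℝ) (hS : S.PosDef)
    (ρ τ ν : ℝ) (hρ : 0 < ρ) (hτ : 0 < τ) (hν : 0 < ν)
    (M : (Fin n → ℝ) × (Fin n → ℝ) × (Fin n → ℝ) → ℝ)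
    (hM : M = fun z =>
      f z.1 + ρ / 2 * (z.1 ⬝ᵥ S.mulVec z.1)
        - τ * ∑ i, (Real.log (z.1 i - xL i) + Real.log (xR i - z.1 i))
        - ν * τ * ∑ i, (Real.log (z.2.1 i * (z.1 i - xL i) / τ)
            + 1 - z.2.1 i * (z.1 i - xL i) / τ)
        - ν * τ * ∑ i, (Real.log (z.2.2 i * (xR i - z.1 i) / τ)
            + 1 - z.2.2 i * (xR i - z.1 i) / τ))
    (x μL μR : Fin n → ℝ)
    (hx : ∀ i, xL i < x i ∧ x i < xR i)
    (hμL : ∀ i, 0 < μL i) (hμR : ∀ i, 0 < μR i) :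
    fderiv ℝ M (x, μL, μR) = 0 ↔
      ((∀ i, fderiv ℝ f x (Pi.single i 1) + ρ * S.mulVec x i - μL i + μR i = 0) ∧
       (∀ i, μL i * (x i - xL i) = τ) ∧
       (∀ i, μR i * (xR i - x i) = τ)) := by
  subst hM
  have hfun : (fun z : (Fin n → ℝ) × (Fin n → ℝ) × (Fin n → ℝ) =>
      f z.1 + ρ / 2 * (z.1 ⬝ᵥ S.mulVec z.1)
        - τ * ∑ i, (Real.log (z.1 i - xL i) + Real.log (xR i - z.1 i))
        - ν * τ * ∑ i, (Real.log (z.2.1 i * (z.1 i - xL i) / τ)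
            + 1 - z.2.1 i * (z.1 i - xL i) / τ)
        - ν * τ * ∑ i, (Real.log (z.2.2 i * (xR i - z.1 i) / τ)
            + 1 - z.2.2 i * (xR i - z.1 i) / τ))
      = (fun z : (Fin n → ℝ) × (Fin n → ℝ) × (Fin n → ℝ) =>
      f z.1 + ρ / 2 * (∑ i, z.1 i * ∑ j, S i j * z.1 j)
        - τ * ∑ i, (Real.log (z.1 i - xL i) + Real.log (xR i - z.1 i))
        - ν * τ * ∑ i, (Real.log (z.2.1 i * (z.1 i - xL i) * τ⁻¹)
            + 1 - z.2.1 i * (z.1 i - xL i) * τ⁻¹)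
        - ν * τ * ∑ i, (Real.log (z.2.2 i * (xR i - z.1 i) * τ⁻¹)
            + 1 - z.2.2 i * (xR i - z.1 i) * τ⁻¹)) := by
    funext z
    simp only [div_eq_mul_inv, dotProduct, Matrix.mulVec]
  rw [hfun]
  have hx1 : ∀ i, (0:ℝ) < x i - xL i := fun i => sub_pos.2 (hx i).1
  have hx2 : ∀ i, (0:ℝ) < xR i - x i := fun i => sub_pos.2 (hx i).2
  have h1 : ∀ i, HasFDerivAt (fun z : (Fin n → ℝ) × (Fin n → ℝ) × (Fin n → ℝ) => z.1 i)
      (PP1 n i) (x, μL, μR) := fun i => (PP1 n i).hasFDerivAt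
  have h2 : ∀ i, HasFDerivAt (fun z : (Fin n → ℝ) × (Fin n → ℝ) × (Fin n → ℝ) => z.2.1 i)
      (PP2 n i) (x, μL, μR) := fun i => (PP2 n i).hasFDerivAt
  have h3 : ∀ i, HasFDerivAt (fun z : (Fin n → ℝ) × (Fin n → ℝ) × (Fin n → ℝ) => z.2.2 i)
      (PP3 n i) (x, μL, μR) := fun i => (PP3 n i).hasFDerivAt
  have hF : HasFDerivAt (fun z : (Fin n → ℝ) × (Fin n → ℝ) × (Fin n → ℝ) => f z.1)
      ((fderiv ℝ f x).comp (ContinuousLinearMap.fst ℝ _ _)) (x, μL, μR) :=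
    ((hf.differentiable two_ne_zero).differentiableAt.hasFDerivAt).comp (x, μL, μR)
      hasFDerivAt_fst
  have hQ : HasFDerivAt (fun z : (Fin n → ℝ) × (Fin n → ℝ) × (Fin n → ℝ) =>
        ∑ i, z.1 i * ∑ j, S i j * z.1 j)
      (∑ i, (x i • (∑ j, S i j • PP1 n j) + (∑ j, S i j * x j) • PP1 n i)) (x, μL, μR) :=
    HasFDerivAt.fun_sum fun i _ =>
      (h1 i).mul (HasFDerivAt.fun_sum fun j _ => (h1 j).const_mul (S i j))
  have hA : ∀ i, HasFDerivAt (fun z : (Fin n → ℝ) × (Fin n → ℝ) × (Fin n → ℝ) =>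
        Real.log (z.1 i - xL i) + Real.log (xR i - z.1 i))
      ((x i - xL i)⁻¹ • PP1 n i + (xR i - x i)⁻¹ • (-PP1 n i)) (x, μL, μR) :=
    fun i => (((h1 i).sub_const (xL i)).log (hx1 i).ne').add
      (((h1 i).const_sub (xR i)).log (hx2 i).ne')
  have hwL : ∀ i, HasFDerivAt (fun z : (Fin n → ℝ) × (Fin n → ℝ) × (Fin n → ℝ) =>
        z.2.1 i * (z.1 i - xL i) * τ⁻¹)
      (τ⁻¹ • (μL i • PP1 n i + (x i - xL i) • PP2 n i)) (x, μL, μR) :=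
    fun i => ((h2 i).mul ((h1 i).sub_const (xL i))).mul_const τ⁻¹
  have hwR : ∀ i, HasFDerivAt (fun z : (Fin n → ℝ) × (Fin n → ℝ) × (Fin n → ℝ) =>
        z.2.2 i * (xR i - z.1 i) * τ⁻¹)
      (τ⁻¹ • (μR i • (-PP1 n i) + (xR i - x i) • PP3 n i)) (x, μL, μR) :=
    fun i => ((h3 i).mul ((h1 i).const_sub (xR i))).mul_const τ⁻¹
  have hBL : ∀ i, HasFDerivAt (fun z : (Fin n → ℝ) × (Fin n → ℝ) × (Fin n → ℝ) =>
        Real.log (z.2.1 i * (z.1 i - xL i) * τ⁻¹) + 1 - z.2.1 i * (z.1 i - xL i) * τ⁻¹)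
      ((μL i * (x i - xL i) * τ⁻¹)⁻¹ • (τ⁻¹ • (μL i • PP1 n i + (x i - xL i) • PP2 n i))
        - τ⁻¹ • (μL i • PP1 n i + (x i - xL i) • PP2 n i)) (x, μL, μR) :=
    fun i => (((hwL i).log (mul_pos (mul_pos (hμL i) (hx1 i)) (inv_pos.2 hτ)).ne').add_const 1).sub (hwL i)
  have hBR : ∀ i, HasFDerivAt (fun z : (Fin n → ℝ) × (Fin n → ℝ) × (Fin n → ℝ) =>
        Real.log (z.2.2 i * (xR i - z.1 i) * τ⁻¹) + 1 - z.2.2 i * (xR i - z.1 i) * τ⁻¹)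
      ((μR i * (xR i - x i) * τ⁻¹)⁻¹ • (τ⁻¹ • (μR i • (-PP1 n i) + (xR i - x i) • PP3 n i))
        - τ⁻¹ • (μR i • (-PP1 n i) + (xR i - x i) • PP3 n i)) (x, μL, μR) :=
    fun i => (((hwR i).log (mul_pos (mul_pos (hμR i) (hx2 i)) (inv_pos.2 hτ)).ne').add_const 1).sub (hwR i)
  have hD : HasFDerivAt (fun z : (Fin n → ℝ) × (Fin n → ℝ) × (Fin n → ℝ) =>
      f z.1 + ρ / 2 * (∑ i, z.1 i * ∑ j, S i j * z.1 j)
        - τ * ∑ i, (Real.log (z.1 i - xL i) + Real.log (xR i - z.1 i))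
        - ν * τ * ∑ i, (Real.log (z.2.1 i * (z.1 i - xL i) * τ⁻¹)
            + 1 - z.2.1 i * (z.1 i - xL i) * τ⁻¹)
        - ν * τ * ∑ i, (Real.log (z.2.2 i * (xR i - z.1 i) * τ⁻¹)
            + 1 - z.2.2 i * (xR i - z.1 i) * τ⁻¹))
      ((fderiv ℝ f x).comp (ContinuousLinearMap.fst ℝ _ _)
        + (ρ / 2) • (∑ i, (x i • (∑ j, S i j • PP1 n j) + (∑ j, S i j * x j) • PP1 n i))
        - τ • ∑ i, ((x i - xL i)⁻¹ • PP1 n i + (xR i - x i)⁻¹ • (-PP1 n i))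
        - (ν * τ) • ∑ i, ((μL i * (x i - xL i) * τ⁻¹)⁻¹ • (τ⁻¹ • (μL i • PP1 n i + (x i - xL i) • PP2 n i))
            - τ⁻¹ • (μL i • PP1 n i + (x i - xL i) • PP2 n i))
        - (ν * τ) • ∑ i, ((μR i * (xR i - x i) * τ⁻¹)⁻¹ • (τ⁻¹ • (μR i • (-PP1 n i) + (xR i - x i) • PP3 n i))
            - τ⁻¹ • (μR i • (-PP1 n i) + (xR i - x i) • PP3 n i))) (x, μL, μR) :=
    (((hF.add (hQ.const_mul (ρ / 2))).sub
        ((HasFDerivAt.fun_sum fun i _ => hA i).const_mul τ)).sub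
        ((HasFDerivAt.fun_sum fun i _ => hBL i).const_mul (ν * τ))).sub
        ((HasFDerivAt.fun_sum fun i _ => hBR i).const_mul (ν * τ))
  rw [hD.fderiv, ContinuousLinearMap.ext_iff]
  simp only [ContinuousLinearMap.zero_apply, ContinuousLinearMap.sub_apply,
    ContinuousLinearMap.add_apply, ContinuousLinearMap.smul_apply,
    ContinuousLinearMap.sum_apply, ContinuousLinearMap.coe_comp',
    Function.comp_apply, ContinuousLinearMap.coe_fst', PP1_apply, PP2_apply,
    PP3_apply, ContinuousLinearMap.neg_apply, smul_eq_mul]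
  constructor
  · intro h
    have hL2 : ∀ i, μL i * (x i - xL i) = τ := by
      intro i
      have hi := h (0, Pi.single i 1, 0)
      simp [Pi.single_apply, mul_ite, ite_mul, Finset.sum_ite_eq', Finset.mem_univ] at hi
      obtain hi | hi := hi
      · exact absurd hi (by push_neg; exact ⟨hν.ne', hτ.ne'⟩)
      · have hb := (hx1 i).ne'
        have ha := (hμL i).ne'
        field_simp at hi
        have h3 : τ * (x i - xL i) * (τ - μL i * (x i - xL i)) = 0 := by linear_combination τ * (x i - xL i) * hi
        rcases mul_eq_zero.1 h3 with h4 | h4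
        · exact absurd h4 (mul_ne_zero hτ.ne' hb)
        · linarith
    have hL3 : ∀ i, μR i * (xR i - x i) = τ := by
      intro i
      have hi := h (0, 0, Pi.single i 1)
      simp [Pi.single_apply, mul_ite, ite_mul, Finset.sum_ite_eq', Finset.mem_univ] at hi
      obtain hi | hi := hi
      · exact absurd hi (by push_neg; exact ⟨hν.ne', hτ.ne'⟩)
      · have hb := (hx2 i).ne'
        have ha := (hμR i).ne'
        field_simp at hi
        have h3 : τ * (xR i - x i) * (τ - μR i * (xR i - x i)) = 0 := by linear_combination τ * (xR i - x i) * hi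
        rcases mul_eq_zero.1 h3 with h4 | h4
        · exact absurd h4 (mul_ne_zero hτ.ne' hb)
        · linarith
    refine ⟨?_, hL2, hL3⟩
    intro i
    have hi := h (Pi.single i 1, 0, 0)
    have hu1 : μL i * (x i - xL i) * τ⁻¹ = 1 := by
      rw [hL2 i, mul_inv_cancel₀ hτ.ne']
    have hu2 : μR i * (xR i - x i) * τ⁻¹ = 1 := by
      rw [hL3 i, mul_inv_cancel₀ hτ.ne']
    simp [Pi.single_apply, mul_ite, ite_mul, Finset.sum_ite_eq', Finset.mem_univ, hu1, hu2] at hi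
    have hsym : ∀ a b, S a b = S b a := fun a b => by
      have h5 := congrFun (congrFun hS.1 b) a
      simpa [Matrix.conjTranspose_apply] using h5
    have hmv : (S *ᵥ x) i = ∑ j, S i j * x j := by
      simp [Matrix.mulVec, dotProduct]
    simp only [Finset.sum_add_distrib, Finset.sum_neg_distrib, Finset.sum_ite_eq',
      Finset.mem_univ, if_true] at hi
    have hswap : ∑ k, x k * S k i = ∑ j, S i j * x j :=
      Finset.sum_congr rfl fun k _ => by rw [hsym i k, mul_comm]
    rw [hswap] at hi
    simp only [← hmv] at hi
    have e1 : (x i - xL i)⁻¹ = μL i / τ := by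
      rw [eq_div_iff hτ.ne', ← hL2 i, mul_comm (μL i), ← mul_assoc,
        inv_mul_cancel₀ (hx1 i).ne', one_mul]
    have e2 : (xR i - x i)⁻¹ = μR i / τ := by
      rw [eq_div_iff hτ.ne', ← hL3 i, mul_comm (μR i), ← mul_assoc,
        inv_mul_cancel₀ (hx2 i).ne', one_mul]
    rw [e1, e2] at hi
    have ha := (hμL i).ne'
    have haR := (hμR i).ne'
    field_simp at hi
    linarith
  · rintro ⟨hk1, hk2, hk3⟩ v
    have hu1 : ∀ i, μL i * (x i - xL i) * τ⁻¹ = 1 := fun i => by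
      rw [hk2 i, mul_inv_cancel₀ hτ.ne']
    have hu2 : ∀ i, μR i * (xR i - x i) * τ⁻¹ = 1 := fun i => by
      rw [hk3 i, mul_inv_cancel₀ hτ.ne']
    simp only [hu1, hu2, inv_one, one_mul, sub_self, Finset.sum_const_zero,
      mul_zero, sub_zero]
    have hsym : ∀ a b, S a b = S b a := fun a b => by
      have h5 := congrFun (congrFun hS.1 b) a
      simpa [Matrix.conjTranspose_apply] using h5
    have hv : (fderiv ℝ f x) v.1 = ∑ i, v.1 i * (fderiv ℝ f x) (Pi.single i 1) := by
      have hvv : v.1 = ∑ i, v.1 i • (Pi.single i 1 : Fin n → ℝ) := by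
        funext j
        simp [Pi.single_apply]
      conv_lhs => rw [hvv]
      rw [map_sum]
      simp [smul_eq_mul]
    have hQs : ∑ i, (x i * ∑ j, S i j * v.1 j + (∑ j, S i j * x j) * v.1 i)
        = ∑ i, v.1 i * (2 * (S *ᵥ x) i) := by
      rw [Finset.sum_add_distrib]
      have t1 : ∑ i, x i * ∑ j, S i j * v.1 j = ∑ j, v.1 j * (S *ᵥ x) j := by
        simp_rw [Finset.mul_sum]
        rw [Finset.sum_comm]
        refine Finset.sum_congr rfl fun j _ => ?_
        have : (S *ᵥ x) j = ∑ i, S j i * x i := by simp [Matrix.mulVec, dotProduct]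
        rw [this, Finset.mul_sum]
        refine Finset.sum_congr rfl fun i _ => by rw [hsym i j]; ring
      have t2 : ∑ i, (∑ j, S i j * x j) * v.1 i = ∑ i, v.1 i * (S *ᵥ x) i := by
        refine Finset.sum_congr rfl fun i _ => ?_
        have : (S *ᵥ x) i = ∑ j, S i j * x j := by simp [Matrix.mulVec, dotProduct]
        rw [this]; ring
      rw [t1, t2, ← Finset.sum_add_distrib]
      exact Finset.sum_congr rfl fun i _ => by ring
    have hAs : ∑ i, ((x i - xL i)⁻¹ * v.1 i + (xR i - x i)⁻¹ * -v.1 i)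
        = ∑ i, v.1 i * (μL i / τ - μR i / τ) := by
      refine Finset.sum_congr rfl fun i _ => ?_
      have e1 : (x i - xL i)⁻¹ = μL i / τ := by
        rw [eq_div_iff hτ.ne', ← hk2 i, mul_comm (μL i), ← mul_assoc,
          inv_mul_cancel₀ (hx1 i).ne', one_mul]
      have e2 : (xR i - x i)⁻¹ = μR i / τ := by
        rw [eq_div_iff hτ.ne', ← hk3 i, mul_comm (μR i), ← mul_assoc,
          inv_mul_cancel₀ (hx2 i).ne', one_mul]
      rw [e1, e2]; ring
    rw [hv, hQs, hAs, Finset.mul_sum, Finset.mul_sum, ← Finset.sum_add_distrib,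
      ← Finset.sum_sub_distrib]
    refine Finset.sum_eq_zero fun i _ => ?_
    have hk := hk1 i
    field_simp
    linear_combination (v.1 i) * hk
end
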